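/- Let d ≥ 2 and 0 < α < 2, and let a_{2n+1} = σ_d · [α(α+2)⋯(α+2n−2)/(2n)!!] · [(d+α−2)(d+α)⋯(d+α+2n−2)]/[d(d+2)⋯(d+2n)]. Then there exist constants c, C > 0 (depending on d, α) such that c·n^{α−2} ≤ a_{2n+1} ≤ C·n^{α−2} for all n ≥ 1. -/

import Mathlib

open Real Finset

private lemma tele_aux (c : ℝ) (hc : 0 < c) (n : ℕ) :
    ∏ k ∈ Finset.range n, (((k : ℝ) + c) / ((k : ℝ) + c + 1)) = c / ((n : ℝ) + c) := by
  induction n with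
  | zero => simp [div_self hc.ne']
  | succ n ih =>
    rw [Finset.prod_range_succ, ih]
    have h1 : (0:ℝ) < (n : ℝ) + c := by positivity
    have h2 : (0:ℝ) < (n : ℝ) + c + 1 := by positivity
    push_cast
    rw [div_mul_div_comm, mul_comm c, mul_div_mul_left _ _ h1.ne']
    congr 1
    ring

private lemma factor_lower {t y : ℝ} (ht0 : 0 ≤ t) (ht1 : t ≤ 1) (hy : 1 ≤ y) :
    ((y - 1) / y) ^ t ≤ 1 - t / y := by
  have hy0 : (0:ℝ) < y := lt_of_lt_of_le one_pos hy
  have h : (y - 1) / y = 1 + (-(1 / y)) := by field_simp; ring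
  have hb : (-1 : ℝ) ≤ -(1 / y) := by
    have : 1 / y ≤ 1 := by
      rw [div_le_one hy0]; exact hy
    linarith
  calc ((y - 1) / y) ^ t = (1 + (-(1 / y))) ^ t := by rw [h]
    _ ≤ 1 + t * (-(1 / y)) := rpow_one_add_le_one_add_mul_self hb ht0 ht1
    _ = 1 - t / y := by ring

private lemma factor_upper {t y : ℝ} (ht0 : 0 ≤ t) (ht1 : t < 1) (hy : 1 ≤ y) :
    1 - t / y ≤ (y / (y + 1)) ^ t := by
  have hy0 : (0:ℝ) < y := lt_of_lt_of_le one_pos hy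
  have hty : t / y ≤ t := div_le_self ht0 hy
  have h1 : (0:ℝ) < 1 - t / y := by linarith
  have hb : (-1 : ℝ) ≤ 1 / y := by
    have : (0:ℝ) ≤ 1 / y := by positivity
    linarith
  have hB : ((y + 1) / y) ^ t ≤ 1 + t / y := by
    have : (y + 1) / y = 1 + 1 / y := by field_simp
    rw [this]
    have := rpow_one_add_le_one_add_mul_self hb ht0 ht1.le
    calc (1 + 1 / y) ^ t ≤ 1 + t * (1 / y) := this
      _ = 1 + t / y := by ring
  have hpos : (0:ℝ) < ((y + 1) / y) ^ t := Real.rpow_pos_of_pos (by positivity) t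
  have hmul : (y / (y + 1)) ^ t * ((y + 1) / y) ^ t = 1 := by
    rw [← Real.mul_rpow (by positivity) (by positivity)]
    have : y / (y + 1) * ((y + 1) / y) = 1 := by field_simp
    rw [this, Real.one_rpow]
  have key : (1 - t / y) * ((y + 1) / y) ^ t ≤ 1 := by
    calc (1 - t / y) * ((y + 1) / y) ^ t ≤ (1 - t / y) * (1 + t / y) :=
          mul_le_mul_of_nonneg_left hB h1.le
      _ = 1 - (t / y) ^ 2 := by ring
      _ ≤ 1 := by nlinarith
  have := key.trans_eq hmul.symm
  exact le_of_mul_le_mul_right this hpos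

private lemma prod_upper {t c : ℝ} (ht0 : 0 ≤ t) (ht1 : t < 1) (hc : 1 ≤ c) (n : ℕ) :
    ∏ k ∈ Finset.range n, (1 - t / ((k : ℝ) + c)) ≤ (c / ((n : ℝ) + c)) ^ t := by
  have hkc : ∀ k : ℕ, (1:ℝ) ≤ (k : ℝ) + c := by
    intro k; have : (0:ℝ) ≤ (k : ℝ) := Nat.cast_nonneg k; linarith
  have hnon : ∀ k ∈ Finset.range n, (0:ℝ) ≤ 1 - t / ((k : ℝ) + c) := by
    intro k _
    have := div_le_self ht0 (hkc k)
    linarith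
  calc ∏ k ∈ Finset.range n, (1 - t / ((k : ℝ) + c))
      ≤ ∏ k ∈ Finset.range n, (((k : ℝ) + c) / ((k : ℝ) + c + 1)) ^ t := by
        apply Finset.prod_le_prod hnon
        intro k _
        exact factor_upper ht0 ht1 (hkc k)
    _ = (∏ k ∈ Finset.range n, (((k : ℝ) + c) / ((k : ℝ) + c + 1))) ^ t := by
        apply Real.finset_prod_rpow
        intro k _
        have := hkc k
        positivity
    _ = (c / ((n : ℝ) + c)) ^ t := by rw [tele_aux c (by linarith) n]

private lemma prod_lower {t c : ℝ} (ht0 : 0 ≤ t) (ht1 : t < 1) (hc : 1 ≤ c) (n : ℕ) :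
    (1 - t / c) * (c / ((n : ℝ) + c)) ^ t ≤
      ∏ k ∈ Finset.range (n + 1), (1 - t / ((k : ℝ) + c)) := by
  have hc0 : (0:ℝ) < c := lt_of_lt_of_le one_pos hc
  rw [Finset.prod_range_succ']
  have hkc : ∀ k : ℕ, (1:ℝ) ≤ ((k : ℕ) : ℝ) + c := by
    intro k; have : (0:ℝ) ≤ (k : ℝ) := Nat.cast_nonneg k; linarith
  have hP : (c / ((n : ℝ) + c)) ^ t ≤
      ∏ k ∈ Finset.range n, (1 - t / (((k : ℕ) + 1 : ℕ) + c)) := by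
    calc (c / ((n : ℝ) + c)) ^ t
        = (∏ k ∈ Finset.range n, (((k : ℝ) + c) / ((k : ℝ) + c + 1))) ^ t := by
          rw [tele_aux c hc0 n]
      _ = ∏ k ∈ Finset.range n, (((k : ℝ) + c) / ((k : ℝ) + c + 1)) ^ t := by
          rw [Real.finset_prod_rpow]
          intro k _
          have := hkc k
          positivity
      _ ≤ ∏ k ∈ Finset.range n, (1 - t / (((k : ℕ) + 1 : ℕ) + c)) := by
          apply Finset.prod_le_prod
          · intro k _
            have := hkc k
            positivity
          · intro k _
            have h1 : (1:ℝ) ≤ ((k : ℝ) + 1) + c := by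
              have := hkc k; linarith
            have := factor_lower ht0 ht1.le h1
            have he : (((k : ℝ) + 1) + c - 1) / (((k : ℝ) + 1) + c) =
                ((k : ℝ) + c) / ((k : ℝ) + c + 1) := by ring_nf
            rw [he] at this
            have hcast : ((((k : ℕ) + 1 : ℕ)) : ℝ) + c = ((k : ℝ) + 1) + c := by
              push_cast; ring
            rw [hcast]
            exact this
  have hf0 : (1 - t / c) ≤ 1 - t / (((0 : ℕ) : ℝ) + c) := by norm_num
  have hnn : (0:ℝ) ≤ (c / ((n : ℝ) + c)) ^ t := by positivity
  have h1c : (0:ℝ) ≤ 1 - t / c := by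
    have : t / c ≤ t := div_le_self ht0 hc
    linarith
  calc (1 - t / c) * (c / ((n : ℝ) + c)) ^ t
      = (c / ((n : ℝ) + c)) ^ t * (1 - t / c) := by ring
    _ ≤ (∏ k ∈ Finset.range n, (1 - t / (((k : ℕ) + 1 : ℕ) + c))) * (1 - t / (((0:ℕ) : ℝ) + c)) := by
        apply mul_le_mul hP hf0 h1c
        calc (0:ℝ) ≤ (c / ((n : ℝ) + c)) ^ t := hnn
          _ ≤ _ := hP

/-- Asymptotics a_{2n+1} ∼ n^{α−2}. -/
theorem stmt_10 (d : ℕ) (hd : 2 ≤ d) (α : ℝ) (hα0 : 0 < α) (hα2 : α < 2)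
    (a : ℕ → ℝ)
    (ha : ∀ n : ℕ, a n =
      (2 * Real.pi ^ ((d : ℝ) / 2) / Real.Gamma ((d : ℝ) / 2)) *
        ((∏ k ∈ Finset.range n, (α + 2 * (k : ℝ))) / (∏ k ∈ Finset.range n, (2 * ((k : ℝ) + 1)))) *
        ((∏ k ∈ Finset.range (n + 1), ((d : ℝ) + α - 2 + 2 * (k : ℝ))) /
          (∏ k ∈ Finset.range (n + 1), ((d : ℝ) + 2 * (k : ℝ))))) :
    ∃ c C : ℝ, 0 < c ∧ 0 < C ∧
      ∀ n : ℕ, 1 ≤ n → c * (n : ℝ) ^ (α - 2) ≤ a n ∧ a n ≤ C * (n : ℝ) ^ (α - 2) := by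
  set t : ℝ := (2 - α) / 2 with ht_def
  have ht0 : 0 < t := by rw [ht_def]; linarith
  have ht1 : t < 1 := by rw [ht_def]; linarith
  have hd2 : (2:ℝ) ≤ (d : ℝ) := by exact_mod_cast hd
  set c : ℝ := (d : ℝ) / 2 with hc_def
  have hc1 : 1 ≤ c := by rw [hc_def]; linarith
  have hc0 : (0:ℝ) < c := lt_of_lt_of_le one_pos hc1
  set S : ℝ := 2 * Real.pi ^ ((d : ℝ) / 2) / Real.Gamma ((d : ℝ) / 2) with hS_def
  have hS : 0 < S := by
    have hg : 0 < Real.Gamma ((d : ℝ) / 2) := Real.Gamma_pos_of_pos (by linarith)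
    have hp : (0:ℝ) < Real.pi ^ ((d : ℝ) / 2) := Real.rpow_pos_of_pos Real.pi_pos _
    positivity
  -- rewrite a n
  have hrw : ∀ n : ℕ, a n = S *
      (∏ k ∈ Finset.range n, (1 - t / ((k : ℝ) + 1))) *
      (∏ k ∈ Finset.range (n + 1), (1 - t / ((k : ℝ) + c))) := by
    intro n
    rw [ha n]
    congr 1
    · congr 1
      rw [← Finset.prod_div_distrib]
      apply Finset.prod_congr rfl
      intro k _
      have hk : (0:ℝ) < (k : ℝ) + 1 := by positivity
      field_simp
      ring
    · rw [← Finset.prod_div_distrib]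
      apply Finset.prod_congr rfl
      intro k _
      have hk : (0:ℝ) < (d : ℝ) + 2 * (k : ℝ) := by
        have : (0:ℝ) ≤ (k : ℝ) := Nat.cast_nonneg k
        linarith
      have hk2 : (0:ℝ) < (k : ℝ) + c := by
        have : (0:ℝ) ≤ (k : ℝ) := Nat.cast_nonneg k
        linarith
      simp only [ht_def, hc_def]
      field_simp
      ring
  refine ⟨S * (1 - t) * ((1 - t / c) * (c / (c + 1)) ^ t), S * c ^ t, ?_, ?_, ?_⟩
  · have h1 : (0:ℝ) < 1 - t := by linarith
    have h2 : (0:ℝ) < 1 - t / c := by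
      have : t / c ≤ t := div_le_self ht0.le hc1
      linarith
    have h3 : (0:ℝ) < (c / (c + 1)) ^ t := Real.rpow_pos_of_pos (by positivity) _
    positivity
  · have : (0:ℝ) < c ^ t := Real.rpow_pos_of_pos hc0 _
    positivity
  intro n hn
  set x : ℝ := (n : ℝ) with hx_def
  have hx1 : (1:ℝ) ≤ x := by rw [hx_def]; exact_mod_cast hn
  have hx0 : (0:ℝ) < x := lt_of_lt_of_le one_pos hx1
  have hxx : x ^ (-t) * x ^ (-t) = x ^ (α - 2) := by
    rw [← Real.rpow_add hx0]
    congr 1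
    rw [ht_def]
    ring
  have hAnn : (0:ℝ) ≤ ∏ k ∈ Finset.range n, (1 - t / ((k : ℝ) + 1)) := by
    apply Finset.prod_nonneg
    intro k _
    have h1 : (1:ℝ) ≤ (k : ℝ) + 1 := by
      have : (0:ℝ) ≤ (k : ℝ) := Nat.cast_nonneg k
      linarith
    have := div_le_self ht0.le h1
    linarith
  have hBnn : (0:ℝ) ≤ ∏ k ∈ Finset.range (n + 1), (1 - t / ((k : ℝ) + c)) := by
    apply Finset.prod_nonneg
    intro k _
    have h1 : (1:ℝ) ≤ (k : ℝ) + c := by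
      have : (0:ℝ) ≤ (k : ℝ) := Nat.cast_nonneg k
      linarith
    have := div_le_self ht0.le h1
    linarith
  have hinvx : (1 / x) ^ t = x ^ (-t) := by
    rw [one_div, Real.inv_rpow hx0.le, ← Real.rpow_neg hx0.le]
  obtain ⟨m, rfl⟩ : ∃ m, n = m + 1 := ⟨n - 1, by omega⟩
  have hxm : x = (m : ℝ) + 1 := by rw [hx_def]; push_cast; ring
  constructor
  · -- lower bound
    have hA : (1 - t) * x ^ (-t) ≤ ∏ k ∈ Finset.range (m + 1), (1 - t / ((k : ℝ) + 1)) := by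
      have := prod_lower ht0.le ht1 le_rfl m
      simp only [div_one] at this
      calc (1 - t) * x ^ (-t) = (1 - t) * (1 / ((m : ℝ) + 1)) ^ t := by
            rw [← hinvx, hxm]
        _ ≤ _ := this
    have hB : (1 - t / c) * ((c / (c + 1)) ^ t * x ^ (-t)) ≤
        ∏ k ∈ Finset.range ((m + 1) + 1), (1 - t / ((k : ℝ) + c)) := by
      have h1 := prod_lower ht0.le ht1 hc1 (m + 1)
      have hcast : ((m + 1 : ℕ) : ℝ) = x := hx_def.symm
      rw [hcast] at h1
      have h2 : (c / (c + 1)) ^ t * x ^ (-t) ≤ (c / (x + c)) ^ t := by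
        have e1 : c / ((c + 1) * x) = c / (c + 1) * (1 / x) := by
          field_simp
        have heq : (c / ((c + 1) * x)) ^ t = (c / (c + 1)) ^ t * (1 / x) ^ t := by
          rw [e1, Real.mul_rpow (by positivity) (by positivity)]
        rw [← hinvx, ← heq]
        apply Real.rpow_le_rpow (by positivity) _ ht0.le
        gcongr
        all_goals first | positivity | nlinarith
      calc (1 - t / c) * ((c / (c + 1)) ^ t * x ^ (-t))
          ≤ (1 - t / c) * (c / (x + c)) ^ t := by
            apply mul_le_mul_of_nonneg_left h2
            have : t / c ≤ t := div_le_self ht0.le hc1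
            linarith
        _ ≤ _ := h1
    rw [hrw (m + 1)]
    calc S * (1 - t) * ((1 - t / c) * (c / (c + 1)) ^ t) * x ^ (α - 2)
        = S * ((1 - t) * x ^ (-t)) * ((1 - t / c) * ((c / (c + 1)) ^ t * x ^ (-t))) := by
          rw [← hxx]; ring
      _ ≤ S * (∏ k ∈ Finset.range (m + 1), (1 - t / ((k : ℝ) + 1))) *
            ((1 - t / c) * ((c / (c + 1)) ^ t * x ^ (-t))) := by
          apply mul_le_mul_of_nonneg_right (mul_le_mul_of_nonneg_left hA hS.le)
          have h2 : (0:ℝ) ≤ 1 - t / c := by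
            have : t / c ≤ t := div_le_self ht0.le hc1
            linarith
          positivity
      _ ≤ S * (∏ k ∈ Finset.range (m + 1), (1 - t / ((k : ℝ) + 1))) *
            (∏ k ∈ Finset.range ((m + 1) + 1), (1 - t / ((k : ℝ) + c))) := by
          apply mul_le_mul_of_nonneg_left hB
          positivity
  · -- upper bound
    have hA : ∏ k ∈ Finset.range (m + 1), (1 - t / ((k : ℝ) + 1)) ≤ x ^ (-t) := by
      have h1 := prod_upper ht0.le ht1 le_rfl (m + 1)
      have hcast : ((m + 1 : ℕ) : ℝ) = x := hx_def.symm
      rw [hcast] at h1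
      calc ∏ k ∈ Finset.range (m + 1), (1 - t / ((k : ℝ) + 1)) ≤ (1 / (x + 1)) ^ t := h1
        _ ≤ (1 / x) ^ t := by
            apply Real.rpow_le_rpow (by positivity) _ ht0.le
            gcongr
            linarith
        _ = x ^ (-t) := hinvx
    have hB : ∏ k ∈ Finset.range ((m + 1) + 1), (1 - t / ((k : ℝ) + c)) ≤ c ^ t * x ^ (-t) := by
      have h1 := prod_upper ht0.le ht1 hc1 ((m + 1) + 1)
      have hcast : (((m + 1) + 1 : ℕ) : ℝ) = x + 1 := by rw [hx_def]; push_cast; ring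
      rw [hcast] at h1
      calc ∏ k ∈ Finset.range ((m + 1) + 1), (1 - t / ((k : ℝ) + c)) ≤ (c / (x + 1 + c)) ^ t := h1
        _ ≤ (c / x) ^ t := by
            apply Real.rpow_le_rpow (by positivity) _ ht0.le
            gcongr
            linarith
        _ = c ^ t * x ^ (-t) := by
            rw [← hinvx, Real.div_rpow hc0.le hx0.le, Real.div_rpow (by norm_num) hx0.le,
              Real.one_rpow]
            field_simp
    rw [hrw (m + 1)]
    calc S * (∏ k ∈ Finset.range (m + 1), (1 - t / ((k : ℝ) + 1))) *
          (∏ k ∈ Finset.range ((m + 1) + 1), (1 - t / ((k : ℝ) + c)))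
        ≤ S * x ^ (-t) * (c ^ t * x ^ (-t)) := by
          apply mul_le_mul
          · exact mul_le_mul_of_nonneg_left hA hS.le
          · exact hB
          · exact hBnn
          · positivity
      _ = S * c ^ t * x ^ (α - 2) := by rw [← hxx]; ring
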